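/- Let H be a real Hilbert space with orthonormal basis (Uₖ) consisting of eigenvectors of a positive self-adjoint operator with eigenvalues 0 < α₁ ≤ α₂ ≤ ⋯ . Suppose F : [t₀,∞) → ℝ given by F(t) = Σₖ αₖ⁻¹ |⟨v_t, Uₖ⟩|² satisfies dF/dt = -2 Σₖ ⟨v_t, Uₖ⟩⟨w_t, Uₖ⟩ with ⟨v_t, w_t⟩ ≥ C₂‖v_t‖² for some C₂ > 0, and ‖v_{t₀}‖ < ∞. Then ∫_{t₀}^∞ ‖v_t‖² dt ≤ (2C₂α₁)⁻¹‖v_{t₀}‖², and hence liminf over t of ‖v_t‖ = 0. -/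

import Mathlib

open scoped RealInnerProductSpace

open MeasureTheory Set Filter

theorem stmt9 {H : Type*} [NormedAddCommGroup H] [InnerProductSpace ℝ H] [CompleteSpace H]
    (U : HilbertBasis ℕ ℝ H) (α : ℕ → ℝ) (hα0 : 0 < α 0) (hαmono : Monotone α)
    (v w : ℝ → H) (t₀ : ℝ) (C₂ : ℝ) (hC₂ : 0 < C₂) (F : ℝ → ℝ)
    (hF : ∀ t, F t = ∑' k, (α k)⁻¹ * (⟪v t, U k⟫)^2)
    (hderiv : ∀ t, t₀ ≤ t →
      HasDerivAt F (-2 * ∑' k, ⟪v t, U k⟫ * ⟪w t, U k⟫) t)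
    (hmono : ∀ t, t₀ ≤ t → C₂ * ‖v t‖^2 ≤ ⟪v t, w t⟫) :
    (∫ t in Set.Ioi t₀, ‖v t‖^2 ≤ (2 * C₂ * α 0)⁻¹ * ‖v t₀‖^2) ∧
    Filter.liminf (fun t => ‖v t‖) Filter.atTop = 0 := by
  have hαpos : ∀ k, 0 < α k := fun k => hα0.trans_le (hαmono (Nat.zero_le k))
  -- Parseval
  have hP : ∀ t, (∑' k, ⟪v t, U k⟫ * ⟪w t, U k⟫) = ⟪v t, w t⟫ := by
    intro t
    rw [← U.tsum_inner_mul_inner (v t) (w t)]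
    congr 1
    funext k
    rw [real_inner_comm (U k) (w t)]
  have hvsum : ∀ t, HasSum (fun k => (⟪v t, U k⟫)^2) (‖v t‖^2) := by
    intro t
    have h := U.hasSum_inner_mul_inner (v t) (v t)
    have : ⟪v t, v t⟫ = ‖v t‖^2 := real_inner_self_eq_norm_sq (v t)
    rw [this] at h
    have e : (fun k => (⟪v t, U k⟫)^2) = fun k => ⟪v t, U k⟫ * ⟪U k, v t⟫ := by
      funext k
      rw [real_inner_comm (U k) (v t), sq]
    rw [e]
    exact h
  -- derivative form
  have hD : ∀ t, t₀ ≤ t → HasDerivAt F (-2 * ⟪v t, w t⟫) t := by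
    intro t ht
    have := hderiv t ht
    rwa [hP t] at this
  -- F is nonnegative
  have hF0 : ∀ t, 0 ≤ F t := by
    intro t
    rw [hF t]
    exact tsum_nonneg fun k => mul_nonneg (inv_nonneg.2 (hαpos k).le) (sq_nonneg _)
  -- bound on F t₀
  have hFt0 : F t₀ ≤ (α 0)⁻¹ * ‖v t₀‖^2 := by
    rw [hF t₀]
    calc (∑' k, (α k)⁻¹ * (⟪v t₀, U k⟫)^2)
        ≤ ∑' k, (α 0)⁻¹ * (⟪v t₀, U k⟫)^2 := by
          refine Summable.tsum_le_tsum (fun k => mul_le_mul_of_nonneg_right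
            (inv_anti₀ hα0 (hαmono (Nat.zero_le k))) (sq_nonneg _)) ?_ ?_
          · exact Summable.of_nonneg_of_le
              (fun k => mul_nonneg (inv_nonneg.2 (hαpos k).le) (sq_nonneg _))
              (fun k => mul_le_mul_of_nonneg_right
                (inv_anti₀ hα0 (hαmono (Nat.zero_le k))) (sq_nonneg _))
              ((hvsum t₀).summable.mul_left _)
          · exact (hvsum t₀).summable.mul_left _
      _ = (α 0)⁻¹ * ‖v t₀‖^2 := by rw [tsum_mul_left, (hvsum t₀).tsum_eq]
  constructor
  · -- the integral bound
    by_cases hint : IntegrableOn (fun t => ‖v t‖^2) (Ioi t₀)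
    · -- bound on finite intervals
      have key : ∀ T, t₀ ≤ T →
          (∫ t in Ioc t₀ T, 2 * C₂ * ‖v t‖^2) ≤ F t₀ - F T := by
        intro T hT
        have hφint : IntegrableOn (fun t => 2 * C₂ * ‖v t‖^2) (Icc t₀ T) := by
          rw [integrableOn_Icc_iff_integrableOn_Ioc]
          exact ((hint.mono_set Set.Ioc_subset_Ioi_self).const_mul _)
        have h2 := intervalIntegral.integral_le_sub_of_hasDeriv_right_of_le hT
            (g := fun t => -F t) (g' := fun t => 2 * ⟪v t, w t⟫)
            (φ := fun t => 2 * C₂ * ‖v t‖^2)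
            (fun x hx => ((hD x hx.1).continuousAt.continuousWithinAt).neg)
            (fun x hx => by
              have := ((hD x hx.1.le).neg).hasDerivWithinAt (s := Ioi x)
              exact (by simpa using this : HasDerivWithinAt (-F) (2 * ⟪v x, w x⟫) (Ioi x) x))
            hφint
            (fun x hx => by
              have h := hmono x hx.1.le
              show 2 * C₂ * ‖v x‖ ^ 2 ≤ 2 * ⟪v x, w x⟫
              linarith)
        rw [intervalIntegral.integral_of_le hT] at h2
        linarith [h2]
      have key2 : ∀ T, t₀ ≤ T →
          (∫ t in t₀..T, ‖v t‖^2) ≤ (2 * C₂)⁻¹ * F t₀ := by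
        intro T hT
        have h1 := key T hT
        rw [MeasureTheory.integral_const_mul] at h1
        have h2 : F t₀ - F T ≤ F t₀ := by linarith [hF0 T]
        have h3 : 2 * C₂ * ∫ t in Ioc t₀ T, ‖v t‖^2 ≤ F t₀ := le_trans h1 h2
        rw [intervalIntegral.integral_of_le hT]
        have h2C : (0:ℝ) < 2 * C₂ := by linarith
        rw [← le_div_iff₀' h2C] at h3
        rw [div_eq_inv_mul] at h3
        exact h3
      have htend := MeasureTheory.intervalIntegral_tendsto_integral_Ioi t₀ hint tendsto_id
      have hle : (∫ t in Ioi t₀, ‖v t‖^2) ≤ (2 * C₂)⁻¹ * F t₀ := by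
        refine le_of_tendsto htend ?_
        filter_upwards [eventually_ge_atTop t₀] with T hT using key2 T hT
      refine hle.trans ?_
      calc (2 * C₂)⁻¹ * F t₀ ≤ (2 * C₂)⁻¹ * ((α 0)⁻¹ * ‖v t₀‖^2) := by
            apply mul_le_mul_of_nonneg_left hFt0
            positivity
        _ = (2 * C₂ * α 0)⁻¹ * ‖v t₀‖^2 := by
            rw [mul_inv]
            ring
    · rw [MeasureTheory.integral_undef hint]
      positivity
  · -- liminf is zero
    -- key: no positive number is an eventual lower bound of ‖v t‖
    have hbound : ∀ a ∈ {a : ℝ | ∀ᶠ t in atTop, a ≤ ‖v t‖}, a ≤ 0 := by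
      intro a ha
      by_contra hpos
      push_neg at hpos
      obtain ⟨T₁, hT₁⟩ := eventually_atTop.1 ha
      set T := max T₁ t₀ with hTdef
      have hTt₀ : t₀ ≤ T := le_max_right _ _
      have hc : (0:ℝ) < 2 * C₂ * a^2 := by positivity
      -- the shifted function g t = F t + 2C₂a² t is antitone on [T, ∞)
      set g : ℝ → ℝ := fun t => F t + 2 * C₂ * a^2 * t with hg
      have hgd : ∀ t ∈ Ici T, HasDerivAt g (-2 * ⟪v t, w t⟫ + 2 * C₂ * a^2) t := by
        intro t ht
        exact (hD t (hTt₀.trans ht)).add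
          ((hasDerivAt_id t).const_mul (2 * C₂ * a^2) |>.congr_deriv (by ring))
      have hganti : AntitoneOn g (Ici T) := by
        refine antitoneOn_of_deriv_nonpos (convex_Ici T)
          (fun t ht => ((hgd t ht).continuousAt.continuousWithinAt)) ?_ ?_
        · intro t ht
          rw [interior_Ici] at ht
          exact ((hgd t (Set.mem_Ici.2 (le_of_lt ht))).differentiableAt).differentiableWithinAt
        · intro t ht
          rw [interior_Ici] at ht
          rw [(hgd t (Set.mem_Ici.2 (le_of_lt ht))).deriv]
          have h1 := hmono t (hTt₀.trans ht.le)
          have h2 : a ≤ ‖v t‖ := hT₁ t ((le_max_left _ _).trans ht.le)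
          have h3 : a^2 ≤ ‖v t‖^2 := by nlinarith
          have h4 : C₂ * a^2 ≤ C₂ * ‖v t‖^2 := mul_le_mul_of_nonneg_left h3 hC₂.le
          linarith
      -- derive a contradiction by going far enough
      have hq : 0 ≤ F T / (2 * C₂ * a^2) := div_nonneg (hF0 T) hc.le
      have hTt₁ : T ≤ T + F T / (2 * C₂ * a^2) + 1 := by linarith
      have hkey := hganti (self_mem_Ici) hTt₁ hTt₁
      have hFnn := hF0 (T + F T / (2 * C₂ * a^2) + 1)
      simp only [hg] at hkey
      have hdiv : 2 * C₂ * a^2 * (F T / (2 * C₂ * a^2)) = F T := by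
        field_simp
      nlinarith
    rw [Filter.liminf_eq]
    apply le_antisymm
    · exact csSup_le ⟨0, by filter_upwards with t using norm_nonneg _⟩ hbound
    · exact le_csSup ⟨0, hbound⟩ (by filter_upwards with t using norm_nonneg _)
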